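/- The Hopf–Stiefel function defined by a ∘ b = |IS(a) + IS(b)| (where IS denotes lexicographic initial segments of Z_2^n for n large enough) satisfies the sub-distributive law: a ∘ (b₁ + b₂) ≤ a ∘ b₁ + a ∘ b₂ for all positive integers a, b₁, b₂. -/

import Mathlib

open Finset Pointwise


/-- Encoding of the lexicographic order on `(ZMod 2)^n`. -/
def lexNat {n : ℕ} (x : Fin n → ZMod 2) : ℕ := ∑ i, (x i).val * 2 ^ (i : ℕ)

/-- The `k` lexicographically smallest elements of `T`. -/
def initSeg {n : ℕ} (T : Finset (Fin n → ZMod 2)) (k : ℕ) : Finset (Fin n → ZMod 2) :=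
  T.filter fun x => (T.filter fun y => lexNat y < lexNat x).card < k

/-- The Hopf–Stiefel function `a ∘ b = |IS(a) + IS(b)|`, computed in `(ZMod 2)^(a+b)`,
a dimension large enough for the value to be the stable one. -/
def hs (a b : ℕ) : ℕ :=
  (initSeg (Finset.univ : Finset (Fin (a + b) → ZMod 2)) a + initSeg Finset.univ b).card

namespace HSAux

lemma xor_bits (d e u v : ℕ) (hd : d < 2) (he : e < 2) :
    (2*u+d) ^^^ (2*v+e) = 2*(u^^^v) + (d^^^e) := by
  have h0 := Nat.xor_bit false u false v
  have h1 := Nat.xor_bit false u true v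
  have h2 := Nat.xor_bit true u false v
  have h3 := Nat.xor_bit true u true v
  simp [Nat.bit_val] at h0 h1 h2 h3
  interval_cases d <;> interval_cases e <;> simp_all

lemma and_bits (d e u v : ℕ) (hd : d < 2) (he : e < 2) :
    (2*u+d) &&& (2*v+e) = 2*(u&&&v) + (d&&&e) := by
  have h0 := Nat.land_bit false u false v
  have h1 := Nat.land_bit false u true v
  have h2 := Nat.land_bit true u false v
  have h3 := Nat.land_bit true u true v
  simp [Nat.bit_val] at h0 h1 h2 h3
  interval_cases d <;> interval_cases e <;> simp_all

lemma xor_split (x y : ℕ) : x ^^^ y = 2*(x/2 ^^^ y/2) + (x%2 ^^^ y%2) := by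
  conv_lhs => rw [← Nat.div_add_mod x 2, ← Nat.div_add_mod y 2]
  exact xor_bits _ _ _ _ (Nat.mod_lt _ two_pos) (Nat.mod_lt _ two_pos)

lemma and_split (x y : ℕ) : x &&& y = 2*(x/2 &&& y/2) + (x%2 &&& y%2) := by
  conv_lhs => rw [← Nat.div_add_mod x 2, ← Nat.div_add_mod y 2]
  exact and_bits _ _ _ _ (Nat.mod_lt _ two_pos) (Nat.mod_lt _ two_pos)

lemma bits_xor_lt (d e : ℕ) (hd : d < 2) (he : e < 2) : d ^^^ e < 2 := by
  interval_cases d <;> interval_cases e <;> decide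

lemma xor_le_add : ∀ x y : ℕ, x ^^^ y ≤ x + y := by
  intro x
  induction x using Nat.strong_induction_on with
  | _ x ih =>
    intro y
    rcases Nat.eq_zero_or_pos x with h | h
    · simp [h]
    · have h2 : x / 2 < x := Nat.div_lt_self h one_lt_two
      have hrec := ih (x/2) h2 (y/2)
      have hs := xor_split x y
      have hm : (x%2 ^^^ y%2) ≤ x%2 + y%2 := by
        have : x % 2 < 2 := Nat.mod_lt _ two_pos
        have : y % 2 < 2 := Nat.mod_lt _ two_pos
        interval_cases h1 : x % 2 <;> interval_cases h2 : y % 2 <;> simp_all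
      omega

lemma xor_eq_add_of_and_eq_zero : ∀ x y : ℕ, x &&& y = 0 → x ^^^ y = x + y := by
  intro x
  induction x using Nat.strong_induction_on with
  | _ x ih =>
    intro y hxy
    rcases Nat.eq_zero_or_pos x with h | h
    · simp [h]
    · have h2 : x / 2 < x := Nat.div_lt_self h one_lt_two
      have hs := and_split x y
      have hrec := ih (x/2) h2 (y/2) (by omega)
      have hx : x % 2 < 2 := Nat.mod_lt _ two_pos
      have hy : y % 2 < 2 := Nat.mod_lt _ two_pos
      have hb : x % 2 &&& y % 2 = 0 := by omega
      have hm : (x%2 ^^^ y%2) = x%2 + y%2 := by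
        interval_cases h1 : x % 2 <;> interval_cases h2 : y % 2 <;> simp_all
      have hsx := xor_split x y
      omega


def f (a b : ℕ) : ℕ :=
  if h : a ≤ 1 ∨ b ≤ 1 then a + b - 1
  else min (a + b - 1) (2 * f ((a+1)/2) ((b+1)/2))
termination_by a + b
decreasing_by omega

lemma f_ge : ∀ n a b, a + b ≤ n → 0 < a → 0 < b → a ≤ f a b ∧ b ≤ f a b := by
  intro n
  induction n with
  | zero => intro a b h ha hb; omega
  | succ n ih =>
    intro a b h ha hb
    rw [f]
    split
    · omega
    · next hcond =>
      have h1 := ih ((a+1)/2) ((b+1)/2) (by omega) (by omega) (by omega)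
      omega

lemma f_one_left (b : ℕ) (hb : 0 < b) : f 1 b = b := by rw [f]; simp

lemma f_cases (a b : ℕ) (ha : 0 < a) (hb : 0 < b) :
    (f a b = a + b - 1 ∧ (a ≤ 1 ∨ b ≤ 1)) ∨
    (f a b = min (a + b - 1) (2 * f ((a+1)/2) ((b+1)/2)) ∧ 2 ≤ a ∧ 2 ≤ b) := by
  rw [f]
  split
  · next h => exact Or.inl ⟨rfl, h⟩
  · next h => exact Or.inr ⟨rfl, by omega, by omega⟩

lemma f_mono : ∀ n a b b', a + b' ≤ n → 0 < a → 0 < b → b ≤ b' → f a b ≤ f a b' := by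
  intro n
  induction n with
  | zero => intro a b b' h ha hb hbb; omega
  | succ n ih =>
    intro a b b' h ha hb hbb
    have hb' : 0 < b' := by omega
    rcases f_cases a b ha hb with ⟨e1, hc1⟩ | ⟨e1, hc1, hc2⟩ <;>
      rcases f_cases a b' ha hb' with ⟨e2, hd1⟩ | ⟨e2, hd1, hd2⟩
    · omega
    · have hg := f_ge (a + b') ((a+1)/2) ((b'+1)/2) (by omega) (by omega) (by omega)
      omega
    · omega
    · have hr := ih ((a+1)/2) ((b+1)/2) ((b'+1)/2) (by omega) (by omega) (by omega) (by omega)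
      omega

lemma f_subadd : ∀ n a b₁ b₂, a + b₁ + b₂ ≤ n → 0 < a → 0 < b₁ → 0 < b₂ →
    f a (b₁ + b₂) ≤ f a b₁ + f a b₂ := by
  intro n
  induction n with
  | zero => intro a b₁ b₂ h ha hb₁ hb₂; omega
  | succ n ih =>
    intro a b₁ b₂ h ha hb₁ hb₂
    have hg1 := f_ge (a + b₁) a b₁ le_rfl ha hb₁
    have hg2 := f_ge (a + b₂) a b₂ le_rfl ha hb₂
    rw [f]
    split
    · next hc =>
      -- a = 1
      have ha1 : a = 1 := by omega
      subst ha1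
      rw [f_one_left b₁ hb₁, f_one_left b₂ hb₂]; omega
    · next hc =>
      -- a ≥ 2, b₁ + b₂ ≥ 2
      have ha2 : 2 ≤ a := by omega
      -- unfoldings of f a b₁ and f a b₂
      have e₁ : f a b₁ = a + b₁ - 1 ∨ f a b₁ = min (a + b₁ - 1) (2 * f ((a+1)/2) ((b₁+1)/2)) := by
        rw [f]; split
        · left; rfl
        · right; rfl
      have e₂ : f a b₂ = a + b₂ - 1 ∨ f a b₂ = min (a + b₂ - 1) (2 * f ((a+1)/2) ((b₂+1)/2)) := by
        rw [f]; split
        · left; rfl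
        · right; rfl
      by_cases h₁ : a + b₁ - 1 ≤ f a b₁
      · omega
      · by_cases h₂ : a + b₂ - 1 ≤ f a b₂
        · omega
        · -- both recursive
          have e₁' : f a b₁ = 2 * f ((a+1)/2) ((b₁+1)/2) := by omega
          have e₂' : f a b₂ = 2 * f ((a+1)/2) ((b₂+1)/2) := by omega
          have hb₁2 : 2 ≤ b₁ := by
            by_contra hb
            have : b₁ = 1 := by omega
            subst this
            rw [f] at h₁
            have hg := f_ge (a+1) ((a+1)/2) 1 (by omega) (by omega) (by omega)
            split at h₁ <;> omega
          have hb₂2 : 2 ≤ b₂ := by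
            by_contra hb
            have : b₂ = 1 := by omega
            subst this
            rw [f] at h₂
            have hg := f_ge (a+1) ((a+1)/2) 1 (by omega) (by omega) (by omega)
            split at h₂ <;> omega
          have hmono := f_mono (n) ((a+1)/2) ((b₁+b₂+1)/2) ((b₁+1)/2 + (b₂+1)/2)
            (by omega) (by omega) (by omega) (by omega)
          have hrec := ih ((a+1)/2) ((b₁+1)/2) ((b₂+1)/2) (by omega) (by omega) (by omega) (by omega)
          omega


open Finset in
theorem xor_range : ∀ n a b, a + b ≤ n → 0 < a → 0 < b →
    Finset.image₂ (· ^^^ ·) (range a) (range b) = range (f a b) := by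
  intro n
  induction n with
  | zero => intro a b h ha hb; omega
  | succ n ih =>
    intro a b hn ha hb
    ext z
    simp only [Finset.mem_image₂, Finset.mem_range]
    constructor
    · rintro ⟨x, hx, y, hy, rfl⟩
      have hle := xor_le_add x y
      rcases f_cases a b ha hb with ⟨e1, hc⟩ | ⟨e1, hc1, hc2⟩
      · omega
      · have hx2 : x/2 < (a+1)/2 := by omega
        have hy2 : y/2 < (b+1)/2 := by omega
        have hmem : x/2 ^^^ y/2 ∈ Finset.image₂ (· ^^^ ·) (range ((a+1)/2)) (range ((b+1)/2)) :=
          Finset.mem_image₂_of_mem (Finset.mem_range.2 hx2) (Finset.mem_range.2 hy2)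
        rw [ih ((a+1)/2) ((b+1)/2) (by omega) (by omega) (by omega)] at hmem
        have hw : x/2 ^^^ y/2 < f ((a+1)/2) ((b+1)/2) := Finset.mem_range.1 hmem
        have hsp := xor_split x y
        have hbits : x%2 ^^^ y%2 < 2 := bits_xor_lt _ _ (Nat.mod_lt _ two_pos) (Nat.mod_lt _ two_pos)
        omega
    · intro hz
      rcases f_cases a b ha hb with ⟨e1, hc⟩ | ⟨e1, hc1, hc2⟩
      · rcases hc with hc | hc
        · have ha1 : a = 1 := by omega
          exact ⟨0, by omega, z, by omega, by simp⟩
        · have hb1 : b = 1 := by omega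
          exact ⟨z, by omega, 0, by omega, by simp⟩
      · rw [e1] at hz
        have hz1 : z < a + b - 1 := by omega
        have hz2 : z < 2 * f ((a+1)/2) ((b+1)/2) := by omega
        have hw : z/2 < f ((a+1)/2) ((b+1)/2) := by omega
        have hmem : z/2 ∈ Finset.image₂ (· ^^^ ·) (range ((a+1)/2)) (range ((b+1)/2)) := by
          rw [ih ((a+1)/2) ((b+1)/2) (by omega) (by omega) (by omega)]
          exact Finset.mem_range.2 hw
        simp only [Finset.mem_image₂, Finset.mem_range] at hmem
        obtain ⟨u, hu, v, hv, huv⟩ := hmem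
        have h00 : 2*u ^^^ 2*v = 2*(u^^^v) := by simpa using xor_bits 0 0 u v (by omega) (by omega)
        have h10 : (2*u+1) ^^^ 2*v = 2*(u^^^v) + 1 := by
          simpa using xor_bits 1 0 u v (by omega) (by omega)
        have h01 : 2*u ^^^ (2*v+1) = 2*(u^^^v) + 1 := by
          simpa using xor_bits 0 1 u v (by omega) (by omega)
        by_cases hε : z % 2 = 0
        · exact ⟨2*u, by omega, 2*v, by omega, by omega⟩
        · by_cases hca : 2*u+1 < a
          · exact ⟨2*u+1, hca, 2*v, by omega, by omega⟩
          · by_cases hcb : 2*v+1 < b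
            · exact ⟨2*u, by omega, 2*v+1, hcb, by omega⟩
            · -- bad case : a = 2u+1, b = 2v+1
              have hau : a = 2*u+1 := by omega
              have hbv : b = 2*v+1 := by omega
              have hne : u &&& v ≠ 0 := by
                intro h0
                have := xor_eq_add_of_and_eq_zero u v h0
                omega
              obtain ⟨j, hj⟩ : ∃ j, (u &&& v).testBit j = true := by
                by_contra hall
                push_neg at hall
                exact hne (Nat.zero_of_testBit_eq_false (by simpa using hall))
              have hj2 : (u.testBit j && v.testBit j) = true := by
                rw [← Nat.testBit_land, hj]
              rw [Bool.and_eq_true] at hj2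
              have hju := hj2.1
              have hjv := hj2.2
              have hu' : u ^^^ 2^j < u := by
                apply Nat.lt_of_testBit j
                · simp [Nat.testBit_xor, hju]
                · exact hju
                · intro k hk
                  simp [Nat.testBit_xor, Nat.testBit_two_pow_of_ne (by omega : j ≠ k)]
              have hv' : v ^^^ 2^j < v := by
                apply Nat.lt_of_testBit j
                · simp [Nat.testBit_xor, hjv]
                · exact hjv
                · intro k hk
                  simp [Nat.testBit_xor, Nat.testBit_two_pow_of_ne (by omega : j ≠ k)]
              have hxor : (u ^^^ 2^j) ^^^ (v ^^^ 2^j) = u ^^^ v := by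
                rw [Nat.xor_assoc, Nat.xor_comm v, xor_cancel_left]
              have h10' : (2*(u ^^^ 2^j)+1) ^^^ 2*(v ^^^ 2^j) = 2*((u ^^^ 2^j)^^^(v ^^^ 2^j)) + 1 := by
                simpa using xor_bits 1 0 (u ^^^ 2^j) (v ^^^ 2^j) (by omega) (by omega)
              exact ⟨2*(u ^^^ 2^j)+1, by omega, 2*(v ^^^ 2^j), by omega, by omega⟩

lemma lexNat_succ {n : ℕ} (x : Fin (n+1) → ZMod 2) :
    lexNat x = (x 0).val + 2 * lexNat (fun i => x i.succ) := by
  unfold lexNat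
  rw [Fin.sum_univ_succ, Finset.mul_sum]
  congr 1
  · simp
  · apply Finset.sum_congr rfl
    intro i _
    simp [Fin.val_succ, pow_succ]
    ring

lemma lexNat_lt : ∀ {n : ℕ} (x : Fin n → ZMod 2), lexNat x < 2^n := by
  intro n
  induction n with
  | zero => intro x; simp [lexNat]
  | succ n ih =>
    intro x
    have h1 := ih (fun i => x i.succ)
    have h2 : (x 0).val < 2 := ZMod.val_lt (x 0)
    rw [lexNat_succ, pow_succ]
    omega

lemma lexNat_inj : ∀ {n : ℕ}, Function.Injective (lexNat (n := n)) := by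
  intro n
  induction n with
  | zero => intro x y _; funext i; exact i.elim0
  | succ n ih =>
    intro x y hxy
    rw [lexNat_succ, lexNat_succ] at hxy
    have hx2 : (x 0).val < 2 := ZMod.val_lt (x 0)
    have hy2 : (y 0).val < 2 := ZMod.val_lt (y 0)
    have hv : (x 0).val = (y 0).val := by omega
    have hL : lexNat (fun i => x i.succ) = lexNat (fun i => y i.succ) := by omega
    have h0 : x 0 = y 0 := by
      have : ∀ u v : ZMod 2, u.val = v.val → u = v := by decide
      exact this _ _ hv
    have htail := ih hL
    funext i
    refine Fin.cases h0 (fun j => ?_) i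
    exact congrFun htail j

lemma lexNat_add : ∀ {n : ℕ} (x y : Fin n → ZMod 2),
    lexNat (x + y) = lexNat x ^^^ lexNat y := by
  intro n
  induction n with
  | zero => intro x y; simp [lexNat]
  | succ n ih =>
    intro x y
    have htail : (fun i : Fin n => (x + y) i.succ) = (fun i => x i.succ) + (fun i => y i.succ) := rfl
    have hIH := ih (fun i => x i.succ) (fun i => y i.succ)
    have hval : ∀ u v : ZMod 2, (u+v).val = u.val ^^^ v.val := by decide
    have hx2 : (x 0).val < 2 := ZMod.val_lt (x 0)
    have hy2 : (y 0).val < 2 := ZMod.val_lt (y 0)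
    have hkey := xor_bits ((x 0).val) ((y 0).val)
      (lexNat (fun i => x i.succ)) (lexNat (fun i => y i.succ)) hx2 hy2
    rw [lexNat_succ, lexNat_succ, lexNat_succ, htail, hIH]
    have h0 : (x + y) 0 = x 0 + y 0 := rfl
    rw [h0, hval]
    have e1 : (x 0).val + 2 * lexNat (fun i => x i.succ)
        = 2 * lexNat (fun i => x i.succ) + (x 0).val := by omega
    have e2 : (y 0).val + 2 * lexNat (fun i => y i.succ)
        = 2 * lexNat (fun i => y i.succ) + (y 0).val := by omega
    rw [e1, e2, hkey]
    omega

open Finset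

lemma lexNat_image {n : ℕ} :
    (univ : Finset (Fin n → ZMod 2)).image lexNat = range (2^n) := by
  apply Finset.eq_of_subset_of_card_le
  · intro m hm
    simp only [Finset.mem_image] at hm
    obtain ⟨x, _, rfl⟩ := hm
    exact Finset.mem_range.2 (lexNat_lt x)
  · rw [Finset.card_image_of_injective _ lexNat_inj, Finset.card_range, Finset.card_univ]
    rw [Fintype.card_fun]
    simp

lemma image_filter_lt {n : ℕ} (s : ℕ) (hs : s ≤ 2^n) :
    ((univ : Finset (Fin n → ZMod 2)).filter fun y => lexNat y < s).image lexNat = range s := by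
  ext m
  constructor
  · intro hm
    simp only [Finset.mem_image, Finset.mem_filter] at hm
    obtain ⟨x, ⟨_, hx⟩, rfl⟩ := hm
    exact Finset.mem_range.2 hx
  · intro hm
    have hm1 : m < s := Finset.mem_range.1 hm
    have hm2 : m ∈ (univ : Finset (Fin n → ZMod 2)).image lexNat := by
      rw [lexNat_image]; exact Finset.mem_range.2 (by omega)
    simp only [Finset.mem_image] at hm2
    obtain ⟨x, _, rfl⟩ := hm2
    exact Finset.mem_image_of_mem _ (Finset.mem_filter.2 ⟨Finset.mem_univ _, hm1⟩)

lemma card_filter_lt {n : ℕ} (s : ℕ) (hs : s ≤ 2^n) :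
    ((univ : Finset (Fin n → ZMod 2)).filter fun y => lexNat y < s).card = s := by
  rw [← Finset.card_image_of_injective _ lexNat_inj, image_filter_lt s hs, Finset.card_range]

lemma initSeg_eq {n : ℕ} (k : ℕ) :
    initSeg (univ : Finset (Fin n → ZMod 2)) k = univ.filter fun x => lexNat x < k := by
  ext x
  simp only [initSeg, Finset.mem_filter, Finset.mem_univ, true_and]
  rw [card_filter_lt (lexNat x) (le_of_lt (lexNat_lt x))]

theorem hs_eq (a b : ℕ) (ha : 0 < a) (hb : 0 < b) : hs a b = f a b := by
  have hha : a ≤ 2^(a+b) := le_of_lt <|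
    calc a < 2^a := Nat.lt_two_pow_self
    _ ≤ 2^(a+b) := Nat.pow_le_pow_right (by norm_num) (by omega)
  have hhb : b ≤ 2^(a+b) := le_of_lt <|
    calc b < 2^b := Nat.lt_two_pow_self
    _ ≤ 2^(a+b) := Nat.pow_le_pow_right (by norm_num) (by omega)
  unfold hs
  rw [initSeg_eq, initSeg_eq]
  rw [← Finset.card_image_of_injective _ lexNat_inj]
  have key : (((univ : Finset (Fin (a+b) → ZMod 2)).filter fun x => lexNat x < a)
        + (univ.filter fun x => lexNat x < b)).image lexNat
      = Finset.image₂ (· ^^^ ·) (range a) (range b) := by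
    have hadd : (((univ : Finset (Fin (a+b) → ZMod 2)).filter fun x => lexNat x < a)
          + (univ.filter fun x => lexNat x < b))
        = Finset.image₂ (· + ·) ((univ : Finset (Fin (a+b) → ZMod 2)).filter fun x => lexNat x < a)
            (univ.filter fun x => lexNat x < b) := rfl
    rw [hadd]
    rw [Finset.image_image₂_distrib (fun x y => lexNat_add x y)]
    rw [image_filter_lt a hha, image_filter_lt b hhb]
  rw [key, xor_range (a+b) a b le_rfl ha hb, Finset.card_range]

end HSAux

theorem stmt1 (a b₁ b₂ : ℕ) (ha : 0 < a) (hb₁ : 0 < b₁) (hb₂ : 0 < b₂) :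
    hs a (b₁ + b₂) ≤ hs a b₁ + hs a b₂ := by
  rw [HSAux.hs_eq a (b₁ + b₂) ha (by omega), HSAux.hs_eq a b₁ ha hb₁, HSAux.hs_eq a b₂ ha hb₂]
  exact HSAux.f_subadd (a + b₁ + b₂) a b₁ b₂ le_rfl ha hb₁ hb₂
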